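/- Let G be a finite simple graph, k ≥ 1, and let E₁, …, E_t be sets of edges of G that are pairwise at distance at least 2k+1 (i.e., for i ≠ j, every endpoint of an edge of E_i is at graph distance at least 2k+1 in G from every endpoint of an edge of E_j). For a set F of edges, let opt_k(F) denote the minimum size of a set of edges of G that covers every edge of F. Then for every k-spanner H* of G, Σ_{i=1}^{t} opt_k(E_i) ≤ |H*|. -/

import Mathlib

namespace DisjointBalls

variable {α : Type} [Fintype α]

/-- The edge set `H` `k`-covers the edge set `F`: for every edge `{u,w}` of `F` there is
a path of length at most `k` between `u` and `w` consisting of edges of `H`. -/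
def Covers (k : ℕ) (H F : Set (Sym2 α)) : Prop :=
  ∀ u w : α, s(u, w) ∈ F →
    ∃ p : (SimpleGraph.fromEdgeSet H).Walk u w, p.length ≤ k

/-- `opt_k(F)`: the minimum size of a set of edges of `G` that `k`-covers every edge
of `F`. -/
noncomputable def optk (G : SimpleGraph α) (k : ℕ) (F : Set (Sym2 α)) : ℕ :=
  sInf {m : ℕ | ∃ H : Set (Sym2 α), H ⊆ G.edgeSet ∧ Covers k H F ∧ H.ncard = m}

/-- For every edge `e` of a walk `p` in a subgraph `G'` of `G`, some endpoint of `e` is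
reachable from the start of `p` by a `G`-walk strictly shorter than `p`. -/
lemma edge_endpoint_close {β : Type} {G' G : SimpleGraph β} (hle : G' ≤ G) {u w : β}
    (p : G'.Walk u w) :
    ∀ e ∈ p.edges, ∃ x ∈ e, ∃ q : G.Walk u x, q.length + 1 ≤ p.length := by
  induction p with
  | nil => simp
  | @cons a b c h p ih =>
    intro e he
    rw [SimpleGraph.Walk.edges_cons, List.mem_cons] at he
    rcases he with rfl | he
    · exact ⟨a, Sym2.mem_mk_left _ _, SimpleGraph.Walk.nil, by simp⟩
    · obtain ⟨x, hx, q, hq⟩ := ih e he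
      exact ⟨x, hx, SimpleGraph.Walk.cons (hle h) q,
        by simp only [SimpleGraph.Walk.length_cons]; omega⟩

theorem statement18 (G : SimpleGraph α) (k : ℕ) (hk : 1 ≤ k)
    (t : ℕ) (E : Fin t → Set (Sym2 α)) (hE : ∀ i, E i ⊆ G.edgeSet)
    (hsep : ∀ i j : Fin t, i ≠ j → ∀ e ∈ E i, ∀ f ∈ E j, ∀ x ∈ e, ∀ y ∈ f,
      ∀ p : G.Walk x y, 2 * k + 1 ≤ p.length)
    (Hstar : Set (Sym2 α)) (hsub : Hstar ⊆ G.edgeSet)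
    (hspanner : Covers k Hstar G.edgeSet) :
    ∑ i : Fin t, optk G k (E i) ≤ Hstar.ncard := by
  classical
  have hle : SimpleGraph.fromEdgeSet Hstar ≤ G := by
    intro a b hab
    rw [SimpleGraph.fromEdgeSet_adj] at hab
    exact (G.mem_edgeSet).1 (hsub hab.1)
  -- the localized pieces of Hstar
  set H : Fin t → Set (Sym2 α) := fun i =>
    {e | e ∈ Hstar ∧ ∃ u x, (∃ w, s(u, w) ∈ E i) ∧ x ∈ e ∧
      ∃ q : G.Walk u x, q.length + 1 ≤ k} with hH
  have hHsub : ∀ i, H i ⊆ Hstar := fun i e he => he.1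
  -- each H i covers E i
  have hcov : ∀ i, Covers k (H i) (E i) := by
    intro i u w huw
    obtain ⟨p, hp⟩ := hspanner u w (hE i huw)
    have hedges : ∀ e ∈ p.edges, e ∈ (SimpleGraph.fromEdgeSet (H i)).edgeSet := by
      intro e he
      have he' : e ∈ (SimpleGraph.fromEdgeSet Hstar).edgeSet := p.edges_subset_edgeSet he
      rw [SimpleGraph.edgeSet_fromEdgeSet] at he' ⊢
      obtain ⟨x, hx, q, hq⟩ := edge_endpoint_close hle p e he
      exact ⟨⟨he'.1, u, x, ⟨w, huw⟩, hx, q, by omega⟩, he'.2⟩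
    exact ⟨p.transfer _ hedges, by rw [SimpleGraph.Walk.length_transfer]; exact hp⟩
  -- each optk G k (E i) ≤ (H i).ncard
  have hopt : ∀ i, optk G k (E i) ≤ (H i).ncard :=
    fun i => Nat.sInf_le ⟨H i, (hHsub i).trans hsub, hcov i, rfl⟩
  -- the H i are pairwise disjoint
  have hdisj : ∀ i j : Fin t, i ≠ j → Disjoint (H i) (H j) := by
    intro i j hij
    rw [Set.disjoint_left]
    rintro e ⟨heH, u, x, ⟨w, huw⟩, hx, q, hq⟩ ⟨_, u', x', ⟨w', hu'w'⟩, hx', q', hq'⟩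
    -- build a short walk from x to x'
    have heG : e ∈ G.edgeSet := hsub heH
    have hr : ∃ r : G.Walk x x', r.length ≤ 1 := by
      induction e with
      | _ a b =>
        rw [Sym2.mem_iff] at hx hx'
        have hab : G.Adj a b := (G.mem_edgeSet).1 heG
        rcases hx with rfl | rfl <;> rcases hx' with rfl | rfl
        · exact ⟨SimpleGraph.Walk.nil, by simp⟩
        · exact ⟨hab.toWalk, by simp⟩
        · exact ⟨hab.symm.toWalk, by simp⟩
        · exact ⟨SimpleGraph.Walk.nil, by simp⟩
    obtain ⟨r, hr⟩ := hr
    have := hsep i j hij (s(u, w)) huw (s(u', w')) hu'w' u (Sym2.mem_mk_left _ _)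
      u' (Sym2.mem_mk_left _ _) ((q.append r).append q'.reverse)
    simp only [SimpleGraph.Walk.length_append, SimpleGraph.Walk.length_reverse] at this
    omega
  -- conclude
  calc ∑ i : Fin t, optk G k (E i) ≤ ∑ i : Fin t, (H i).ncard :=
        Finset.sum_le_sum fun i _ => hopt i
    _ = ∑ i : Fin t, ((H i).toFinite.toFinset).card := by
        refine Finset.sum_congr rfl fun i _ => ?_
        exact Set.ncard_eq_toFinset_card _ _
    _ = (Finset.univ.biUnion fun i => ((H i).toFinite.toFinset)).card := by
        refine (Finset.card_biUnion ?_).symm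
        intro i _ j _ hij
        simp only [Function.onFun]
        rw [Finset.disjoint_left]
        intro e he he'
        rw [Set.Finite.mem_toFinset] at he he'
        exact (Set.disjoint_left.1 (hdisj i j hij)) he he'
    _ ≤ (Hstar.toFinite.toFinset).card := by
        apply Finset.card_le_card
        intro e he
        rw [Finset.mem_biUnion] at he
        obtain ⟨i, _, he⟩ := he
        rw [Set.Finite.mem_toFinset] at he ⊢
        exact hHsub i he
    _ = Hstar.ncard := (Set.ncard_eq_toFinset_card _ _).symm

end DisjointBalls
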